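/- Each f_a is a Bernstein function: f_a(0) = 0, f_a(x) ≥ 0 for all x ≥ 0, and for every integer n ≥ 1 and every x > 0 one has (−1)^{n+1} · (iterated derivative of order n of f_a at x) ≥ 0. -/

import Mathlib

/-- The homographic family `f_a(x) = x e^a / (1 + x (e^a - 1))`. -/
noncomputable def f (a x : ℝ) : ℝ := x * Real.exp a / (1 + x * (Real.exp a - 1))

lemma iter_const_zero : ∀ n : ℕ, iteratedDeriv (n + 1) (fun _ : ℝ => (1 : ℝ)) = fun _ => 0 := by
  intro n
  induction n with
  | zero => ext x; simp [iteratedDeriv_one]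
  | succ m ih =>
    rw [iteratedDeriv_succ, ih]
    ext x; simp

lemma iter_formula (b c : ℝ) (hc : 0 < c) :
    ∀ n : ℕ, ∀ x : ℝ, 0 < 1 + c * x →
      iteratedDeriv (n + 1) (fun y : ℝ => y * b / (1 + y * c)) x
        = b * (n + 1).factorial * c ^ n * (-1) ^ n / (1 + c * x) ^ (n + 2) := by
  intro n
  induction n with
  | zero =>
    intro x hx
    have hne : (1 + x * c) ≠ 0 := by rw [mul_comm]; exact ne_of_gt hx
    have hu : HasDerivAt (fun y : ℝ => y * b) b x := by
      simpa using (hasDerivAt_id x).mul_const b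
    have hv : HasDerivAt (fun y : ℝ => 1 + y * c) c x := by
      simpa using ((hasDerivAt_id x).mul_const c).const_add 1
    have hd := (hu.fun_div hv hne).deriv
    rw [iteratedDeriv_one, hd]
    have hne' : (1 + c * x) ≠ 0 := ne_of_gt hx
    field_simp
    ring
  | succ m ih =>
    intro x hx
    rw [iteratedDeriv_succ]
    have hUopen : IsOpen {y : ℝ | 0 < 1 + c * y} :=
      isOpen_lt continuous_const (by continuity)
    have heq : iteratedDeriv (m + 1) (fun y : ℝ => y * b / (1 + y * c))
        =ᶠ[nhds x] fun y => b * (m + 1).factorial * c ^ m * (-1) ^ m / (1 + c * y) ^ (m + 2) :=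
      Filter.eventuallyEq_of_mem (hUopen.mem_nhds hx) (fun y hy => ih y hy)
    rw [heq.deriv_eq]
    have hne : (1 + c * x) ≠ 0 := ne_of_gt hx
    have hpne : ((1 + c * x) ^ (m + 2) : ℝ) ≠ 0 := pow_ne_zero _ hne
    have h1 : HasDerivAt (fun y : ℝ => 1 + c * y) c x := by
      simpa using ((hasDerivAt_id x).const_mul c).const_add 1
    have h2 : HasDerivAt (fun y : ℝ => (1 + c * y) ^ (m + 2))
        (((m : ℝ) + 2) * (1 + c * x) ^ (m + 1) * c) x := by
      simpa using h1.fun_pow (m + 2)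
    have h3 : HasDerivAt (fun y : ℝ => ((1 + c * y) ^ (m + 2))⁻¹)
        (-(((m : ℝ) + 2) * (1 + c * x) ^ (m + 1) * c) / ((1 + c * x) ^ (m + 2)) ^ 2) x :=
      h2.inv hpne
    have h4 := (h3.const_mul (b * (m + 1).factorial * c ^ m * (-1) ^ m)).deriv
    have hfun : (fun y : ℝ => b * (m + 1).factorial * c ^ m * (-1) ^ m / (1 + c * y) ^ (m + 2))
        = fun y => b * (m + 1).factorial * c ^ m * (-1) ^ m * ((1 + c * y) ^ (m + 2))⁻¹ := by
      funext y; rw [div_eq_mul_inv]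
    rw [hfun, h4]
    rw [Nat.factorial_succ (m + 1)]
    push_cast
    field_simp
    ring

/-- Each `f_a` is a Bernstein function: `f_a(0) = 0`, `f_a(x) ≥ 0` for `x ≥ 0`, and for every
`n ≥ 1` and `x > 0` one has `(-1)^(n+1) · f_a^(n)(x) ≥ 0`. -/
theorem f_bernstein (a : ℝ) (ha : 0 ≤ a) :
    f a 0 = 0 ∧ (∀ x : ℝ, 0 ≤ x → 0 ≤ f a x) ∧
      (∀ n : ℕ, 1 ≤ n → ∀ x : ℝ, 0 < x → 0 ≤ (-1 : ℝ) ^ (n + 1) * iteratedDeriv n (f a) x) := by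
  have hb : 1 ≤ Real.exp a := Real.one_le_exp ha
  refine ⟨by simp [f], ?_, ?_⟩
  · intro x hx
    apply div_nonneg (mul_nonneg hx (Real.exp_nonneg a))
    have : 0 ≤ x * (Real.exp a - 1) := mul_nonneg hx (by linarith)
    linarith
  · intro n hn x hx
    rcases n with _ | m
    · omega
    rcases eq_or_lt_of_le (sub_nonneg.mpr hb) with hc | hc
    · -- exp a = 1, f a = id
      have hexp : Real.exp a = 1 := by linarith [hc.symm ▸ (rfl : Real.exp a - 1 = Real.exp a - 1)]
      have hfa : f a = fun y : ℝ => y := by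
        funext y; simp [f, hexp]
      rw [hfa]
      rcases m with _ | k
      · simp [iteratedDeriv_one]
      · rw [iteratedDeriv_succ']
        have : deriv (fun y : ℝ => y) = fun _ : ℝ => (1 : ℝ) := by
          funext y; simp
        rw [this, iter_const_zero k]
        simp
    · -- exp a > 1
      set c := Real.exp a - 1 with hcdef
      have hfa : f a = fun y : ℝ => y * Real.exp a / (1 + y * c) := by
        funext y; rfl
      have hx' : 0 < 1 + c * x := by positivity
      rw [hfa, iter_formula (Real.exp a) c hc m x hx']
      have key : ((-1 : ℝ) ^ (m + 1 + 1)) * (-1 : ℝ) ^ m = 1 := by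
        rw [← pow_add]
        exact Even.neg_one_pow ⟨m + 1, by ring⟩
      have heq : ((-1 : ℝ) ^ (m + 1 + 1)) *
          (Real.exp a * (m + 1).factorial * c ^ m * (-1) ^ m / (1 + c * x) ^ (m + 2))
          = ((-1 : ℝ) ^ (m + 1 + 1) * (-1 : ℝ) ^ m) *
            (Real.exp a * (m + 1).factorial * c ^ m / (1 + c * x) ^ (m + 2)) := by
        ring
      rw [heq, key, one_mul]
      positivity
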